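/- Let n ∈ {2,3}, γ > 1, λ > 0, and let κ be real with κ + n > 0 and λ < 1 + (κ+n)/2. Define α = (κ(γ-1)+2(λ-1))/(2γ), V_* = (κ-2(λ-1))/(nγ), q = (κ(γ-1)+2(λ-1))/(κ+n), and σ = (1/λ)(1 + α/(1+V_*)) (note that 1+V_* > 0 under these hypotheses). If α ≤ 0 and κ + 2λ(σ-1)/(1-γ+q) ≥ 0, then α = 0, i.e. κ must equal the isentropic value κ̂ = 2(1-λ)/(γ-1). -/

import Mathlib

noncomputable section

/-- `V_* = (κ - 2(λ-1))/(nγ)` -/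
def Vstar (n γ lam κ : ℝ) : ℝ := (κ - 2*(lam - 1)) / (n*γ)

/-- `α = (κ(γ-1) + 2(λ-1))/(2γ)` -/
def alphaP (γ lam κ : ℝ) : ℝ := (κ*(γ - 1) + 2*(lam - 1)) / (2*γ)

/-- `k₁ = 1 + (n-1)(γ-1)/2` -/
def K1 (n γ : ℝ) : ℝ := 1 + (n - 1)*(γ - 1)/2

/-- `k₂ = ((n-1)(γ-1) + (γ-3)(λ-1))/2` -/
def K2 (n γ lam : ℝ) : ℝ := ((n - 1)*(γ - 1) + (γ - 3)*(lam - 1)) / 2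

/-- `k₃ = (γ-1)(λ-1)/2` -/
def K3 (γ lam : ℝ) : ℝ := (γ - 1)*(lam - 1)/2

/-- `G(V,C) = nC²(V - V_*) - V(1+V)(λ+V)` -/
def Gf (n γ lam κ V C : ℝ) : ℝ := n*C^2*(V - Vstar n γ lam κ) - V*(1+V)*(lam+V)

/-- `F(V,C) = C[C²(1 + α/(1+V)) - k₁(1+V)² + k₂(1+V) - k₃]` -/
def Ff (n γ lam κ V C : ℝ) : ℝ :=
  C*(C^2*(1 + alphaP γ lam κ/(1+V)) - K1 n γ*(1+V)^2 + K2 n γ lam*(1+V) - K3 γ lam)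

/-- The isentropic exponent `κ̂ = 2(1-λ)/(γ-1)`. -/
def khat (γ lam : ℝ) : ℝ := 2*(1 - lam)/(γ - 1)

/-- `a = ((γ-3)/(m(γ-1)))μ - 1`, with `m = n-1`, `μ = λ-1`. -/
def aIs (n γ lam : ℝ) : ℝ := ((γ - 3)/((n-1)*(γ - 1)))*(lam - 1) - 1

/-- `Q = ((γ-3)/(m(γ-1)))²μ² - 2((γ+1)/(m(γ-1)))μ + 1`. -/
def QIs (n γ lam : ℝ) : ℝ :=
  ((γ - 3)/((n-1)*(γ - 1)))^2*(lam - 1)^2 - 2*((γ + 1)/((n-1)*(γ - 1)))*(lam - 1) + 1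

/-- `V₊ = (a + √Q)/2` in the isentropic case `κ = κ̂`. -/
def VpIs (n γ lam : ℝ) : ℝ := (aIs n γ lam + Real.sqrt (QIs n γ lam))/2

/-- `V₋ = (a - √Q)/2` in the isentropic case `κ = κ̂`. -/
def VmIs (n γ lam : ℝ) : ℝ := (aIs n γ lam - Real.sqrt (QIs n γ lam))/2

/-- under the integrability constraints `κ + n > 0` and `λ < 1 + (κ+n)/2`,
if `α ≤ 0` and `κ + 2λ(σ-1)/(1-γ+q) ≥ 0`, where `q = (κ(γ-1)+2(λ-1))/(κ+n)` and
`σ = (1/λ)(1 + α/(1+V_*))`, then `α = 0`, i.e. `κ = κ̂ = 2(1-λ)/(γ-1)`. -/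
theorem stmt_12 (n γ lam κ : ℝ) (hn : n = 2 ∨ n = 3) (hγ : 1 < γ) (hlam : 0 < lam)
    (h1 : 0 < κ + n) (h2 : lam < 1 + (κ + n)/2)
    (hα : alphaP γ lam κ ≤ 0)
    (hρ : 0 ≤ κ + 2*lam*((1/lam)*(1 + alphaP γ lam κ/(1 + Vstar n γ lam κ)) - 1)
                  /(1 - γ + (κ*(γ - 1) + 2*(lam - 1))/(κ + n))) :
    alphaP γ lam κ = 0 ∧ κ = khat γ lam := by
  have hne : (1:ℝ) < n := by rcases hn with h|h <;> rw [h] <;> norm_num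
  have hn0 : (0:ℝ) < n := by linarith
  have hγ1 : (0:ℝ) < γ - 1 := by linarith
  have hγ0 : (0:ℝ) < γ := by linarith
  have hA : κ*(γ - 1) + 2*(lam - 1) ≤ 0 := by
    have hrw : κ*(γ - 1) + 2*(lam - 1) = alphaP γ lam κ * (2*γ) := by
      unfold alphaP; field_simp
    rw [hrw]
    exact mul_nonpos_of_nonpos_of_nonneg hα (by linarith)
  have hD : 0 < n*γ + κ - 2*(lam - 1) := by nlinarith [mul_pos hγ0 h1]
  have hE : 2*(lam - 1) - n*(γ - 1) < 0 := by nlinarith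
  have hlam' : lam ≠ 0 := ne_of_gt hlam
  have hγ' : γ ≠ 0 := ne_of_gt hγ0
  have hn' : n ≠ 0 := ne_of_gt hn0
  have hκn : κ + n ≠ 0 := ne_of_gt h1
  have hD' : n*γ + κ - 2*(lam - 1) ≠ 0 := ne_of_gt hD
  have hE' : 2*(lam - 1) - n*(γ - 1) ≠ 0 := ne_of_lt hE
  have h1V : 1 + Vstar n γ lam κ = (n*γ + κ - 2*(lam - 1))/(n*γ) := by
    unfold Vstar; field_simp; ring
  have h1q : 1 - γ + (κ*(γ - 1) + 2*(lam - 1))/(κ + n)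
      = (2*(lam - 1) - n*(γ - 1))/(κ + n) := by
    field_simp; ring
  have key : κ + 2*lam*((1/lam)*(1 + alphaP γ lam κ/(1 + Vstar n γ lam κ)) - 1)
                  /(1 - γ + (κ*(γ - 1) + 2*(lam - 1))/(κ + n))
      = n*(κ*(γ - 1) + 2*(lam - 1))/(n*γ + κ - 2*(lam - 1)) := by
    rw [h1V, h1q]
    unfold alphaP
    have hD'' : γ*n + κ - 2*(lam - 1) ≠ 0 := by rw [mul_comm]; exact hD'
    have hE'' : 2*(lam - 1) - (γ - 1)*n ≠ 0 := by rw [mul_comm (γ - 1) n]; exact hE'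
    field_simp
    ring
  rw [key] at hρ
  have hA0 : κ*(γ - 1) + 2*(lam - 1) = 0 := by
    have h3 : 0 ≤ n*(κ*(γ - 1) + 2*(lam - 1)) := by
      have := mul_nonneg hρ hD.le
      rwa [div_mul_cancel₀ _ hD'] at this
    nlinarith
  constructor
  · unfold alphaP; rw [hA0]; simp
  · unfold khat
    rw [eq_div_iff (ne_of_gt hγ1)]
    linarith
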